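/- Let A be a C*-algebra, r ≥ 2, and let e₁, …, e_r ∈ A be mutually orthogonal tripotents (e_i e_i* e_i = e_i and e_i □ e_j = 0 for i ≠ j). Let 2 ≤ m ≤ r. Then, as bounded linear maps on A, ∏_{i=1}^{m−1} P₀(e_i) = ∏_{i=1}^{r} P₀(e_i) + Σ_{k=m}^{r} ( P₁(e_k) ∘ ∏_{i ∈ {1,…,r}, i ≠ k} P₀(e_i) ) + Σ_{m ≤ i < k ≤ r} P₁(e_i) ∘ P₁(e_k) + Σ_{i=m}^{r} P₂(e_i), where each product of projections is taken in increasing order of index (the Peirce projections of mutually orthogonal tripotents commute, so the order is immaterial). -/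

import Mathlib

/-- The box operator `e □ e` of a C*-algebra (as a JB*-triple):
`x ↦ {e,e,x} = (e e* x + x e* e)/2`. -/
noncomputable def boxSelf {A : Type*} [NonUnitalCStarAlgebra A] (e x : A) : A :=
  (2 : ℂ)⁻¹ • (e * star e * x + x * star e * e)

/-- The Peirce 2-projection `P₂(e) = 2(e□e)² − e□e`. -/
noncomputable def P2 {A : Type*} [NonUnitalCStarAlgebra A] (e x : A) : A :=
  (2 : ℂ) • boxSelf e (boxSelf e x) - boxSelf e x

/-- The Peirce 1-projection `P₁(e) = 4(e□e − (e□e)²)`. -/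
noncomputable def P1 {A : Type*} [NonUnitalCStarAlgebra A] (e x : A) : A :=
  (4 : ℂ) • (boxSelf e x - boxSelf e (boxSelf e x))

/-- The Peirce 0-projection `P₀(e) : x ↦ x − e e* x − x e* e + e e* x e* e`. -/
def P0 {A : Type*} [NonUnitalCStarAlgebra A] (e x : A) : A :=
  x - e * star e * x - x * star e * e + e * star e * x * star e * e

/-- Composition, in the order listed, of the maps `f i` for `i` running through a list `l`,
applied to `x`; for an increasing list this is the product taken in increasing index order. -/
def compList {A : Type*} (f : ℕ → A → A) (l : List ℕ) (x : A) : A :=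
  l.foldr (fun i y => f i y) x

set_option linter.unusedSectionVars false

section Aux
variable {A : Type*} [NonUnitalCStarAlgebra A]

lemma half_cancel {a : A} (h : a + a = 0) : a = 0 := by
  have h2 : (2:ℂ) • a = 0 := by rw [two_smul]; exact h
  calc a = (2:ℂ)⁻¹ • ((2:ℂ) • a) := by rw [smul_smul]; norm_num
  _ = 0 := by rw [h2, smul_zero]

lemma orthKey {c q : A} (hc : c * star c * c = c)
    (h : ∀ x : A, q * star c * x + x * star c * q = 0) :
    c * star c * q = 0 ∧ q * star c * c = 0 := by
  have h0 := h c
  have h1 := congrArg (fun y => c * star c * y) h0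
  have h2 := congrArg (fun y => y * (star c * c)) h0
  simp only [mul_add, add_mul, mul_zero, zero_mul] at h1 h2
  have e1 : c * star c * (c * star c * q) = c * star c * q := by
    calc c * star c * (c * star c * q) = (c * star c * c) * (star c * q) := by
          simp [mul_assoc]
      _ = c * star c * q := by rw [hc, mul_assoc]
  have e2 : (q * star c * c) * (star c * c) = q * star c * c := by
    calc (q * star c * c) * (star c * c) = q * star c * (c * star c * c) := by
          simp [mul_assoc]
      _ = q * star c * c := by rw [hc]
  have e3 : (c * star c * q) * (star c * c) = c * star c * (q * star c * c) := by
    simp [mul_assoc]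
  rw [e1] at h1
  rw [e2, e3] at h2
  have huv : c * star c * q = q * star c * c := by
    have h2' : c * star c * (q * star c * c) + q * star c * c = 0 := by
      rw [add_comm]; exact h2
    exact add_left_cancel (h1.trans h2'.symm)
  constructor
  · apply half_cancel
    rw [huv] at h0 ⊢
    rw [add_comm] at h0 ⊢
    exact h0
  · apply half_cancel
    rw [← huv] at h0 ⊢
    exact h0

lemma ext0 {u v w : A} (h : u * v * w = 0) (y : A) : u * (v * (w * y)) = 0 := by
  simpa [mul_assoc] using congrArg (· * y) h

lemma ext0' {u v w : A} (h : u * v * w = 0) : u * (v * w) = 0 := by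
  simpa [mul_assoc] using h

lemma P2_eq {e : A} (he : e * star e * e = e) (x : A) :
    P2 e x = e * star e * x * star e * e := by
  have A1 : e * star e * (e * star e * x) = e * star e * x := by
    calc e * star e * (e * star e * x) = (e * star e * e) * (star e * x) := by
          simp [mul_assoc]
      _ = e * star e * x := by rw [he, mul_assoc]
  have A2 : e * star e * (x * star e * e) = e * star e * x * star e * e := by
    simp [mul_assoc]
  have A3 : x * star e * e * star e * e = x * star e * e := by
    calc x * star e * e * star e * e = x * star e * (e * star e * e) := by
          simp [mul_assoc]
      _ = x * star e * e := by rw [he]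
  simp only [P2, boxSelf, smul_add, mul_smul_comm, smul_mul_assoc, mul_add, add_mul,
    A1, A2, A3, smul_smul, smul_sub]
  module

lemma P1_eq {e : A} (he : e * star e * e = e) (x : A) :
    P1 e x = e * star e * x + x * star e * e
      - e * star e * x * star e * e - e * star e * x * star e * e := by
  have A1 : e * star e * (e * star e * x) = e * star e * x := by
    calc e * star e * (e * star e * x) = (e * star e * e) * (star e * x) := by
          simp [mul_assoc]
      _ = e * star e * x := by rw [he, mul_assoc]
  have A2 : e * star e * (x * star e * e) = e * star e * x * star e * e := by
    simp [mul_assoc]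
  have A3 : x * star e * e * star e * e = x * star e * e := by
    calc x * star e * e * star e * e = x * star e * (e * star e * e) := by
          simp [mul_assoc]
      _ = x * star e * e := by rw [he]
  simp only [P1, boxSelf, smul_add, mul_smul_comm, smul_mul_assoc, mul_add, add_mul,
    A1, A2, A3, smul_smul, smul_sub]
  module

/-- `dd u v x = u u* x v* v`. -/
def dd (u v x : A) : A := u * star u * x * star v * v

variable {a b : A}
  (ha : a * star a * a = a) (hb : b * star b * b = b)
  (zab1 : a * star a * b = 0) (zab2 : b * star a * a = 0)
  (zba1 : b * star b * a = 0) (zba2 : a * star b * b = 0)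

include ha hb zab1 zab2 zba1 zba2 in
lemma K5 (x : A) : P1 a (P1 b x) = dd a b x + dd b a x := by
  rw [P1_eq ha, P1_eq hb, dd, dd]
  simp [mul_add, add_mul, mul_sub, sub_mul, mul_assoc,
    ext0 zab1, ext0' zab1, ext0 zab2, ext0' zab2,
    ext0 zba1, ext0' zba1, ext0 zba2, ext0' zba2]

include ha hb zab1 zab2 zba1 zba2 in
lemma K7 (x : A) : P1 a (P0 b x) = P1 a x - dd a b x - dd b a x := by
  rw [P1_eq ha, P1_eq ha, P0, dd, dd]
  simp [mul_add, add_mul, mul_sub, sub_mul, mul_assoc,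
    ext0 zab1, ext0' zab1, ext0 zab2, ext0' zab2,
    ext0 zba1, ext0' zba1, ext0 zba2, ext0' zba2]
  abel

include ha hb zab1 zab2 zba1 zba2 in
lemma K8 (x : A) : P2 a (P0 b x) = P2 a x := by
  rw [P2_eq ha, P2_eq ha, P0]
  simp [mul_add, add_mul, mul_sub, sub_mul, mul_assoc,
    ext0 zab1, ext0' zab1, ext0 zab2, ext0' zab2,
    ext0 zba1, ext0' zba1, ext0 zba2, ext0' zba2]

omit ha hb zab1 zab2 zba1 zba2 in
lemma K1 {u : A} (hu : u * star u * u = u) (x : A) : P0 u x = x - P1 u x - P2 u x := by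
  rw [P1_eq hu, P2_eq hu, P0]; abel

omit ha hb zab1 zab2 zba1 zba2 in
lemma K6 {a b c : A} (z1 : a * star a * c = 0) (z2 : c * star b * b = 0) (x : A) :
    dd a b (P0 c x) = dd a b x := by
  rw [P0, dd, dd]
  simp [mul_add, add_mul, mul_sub, sub_mul, mul_assoc,
    ext0 z1, ext0' z1, ext0 z2, ext0' z2]

omit ha hb zab1 zab2 zba1 zba2 in
/-- double-sum decomposition over `insert`. -/
lemma DS {B : Type*} [AddCommMonoid B] (s : Finset ℕ) (a : ℕ) (has : a ∉ s)
    (d : ℕ → ℕ → B) :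
    ∑ i ∈ insert a s, ∑ j ∈ (insert a s).erase i, d i j
      = (∑ i ∈ s, ∑ j ∈ s.erase i, d i j) + (∑ j ∈ s, d a j) + (∑ i ∈ s, d i a) := by
  rw [Finset.sum_insert has, Finset.erase_insert has]
  have h1 : ∀ i ∈ s, ∑ j ∈ (insert a s).erase i, d i j
      = d i a + ∑ j ∈ s.erase i, d i j := by
    intro i hi
    have hia : a ≠ i := by rintro rfl; exact has hi
    rw [Finset.erase_insert_of_ne hia,
      Finset.sum_insert (by simp only [Finset.mem_erase]; exact fun h => has h.2)]
  rw [Finset.sum_congr rfl h1, Finset.sum_add_distrib]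
  abel

end Aux

section Main
variable {A : Type*} [NonUnitalCStarAlgebra A] (r : ℕ) (e : ℕ → A)
  (htri : ∀ i ∈ Finset.Icc 1 r, e i * star (e i) * e i = e i)
  (horth : ∀ i ∈ Finset.Icc 1 r, ∀ j ∈ Finset.Icc 1 r, i ≠ j →
    ∀ x : A, e i * star (e j) * x + x * star (e j) * e i = 0)

include htri horth

lemma keyZ : ∀ i ∈ Finset.Icc 1 r, ∀ j ∈ Finset.Icc 1 r, i ≠ j →
    e i * star (e i) * e j = 0 ∧ e j * star (e i) * e i = 0 := by
  intro i hi j hj hij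
  exact orthKey (htri i hi) (fun x => horth j hj i hi (Ne.symm hij) x)

lemma M0 : ∀ (l : List ℕ), (∀ i ∈ l, i ∈ Finset.Icc 1 r) →
    ∀ a ∈ Finset.Icc 1 r, ∀ b ∈ Finset.Icc 1 r, a ∉ l → b ∉ l → ∀ x : A,
    dd (e a) (e b) (compList (fun i => P0 (e i)) l x) = dd (e a) (e b) x := by
  intro l
  induction l with
  | nil => intro _ a _ b _ _ _ x; rfl
  | cons c t ih =>
    intro hl a ha b hb hal hbl x
    have hc : c ∈ Finset.Icc 1 r := hl c (by simp)
    have hac : a ≠ c := by rintro rfl; exact hal (by simp)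
    have hbc : b ≠ c := by rintro rfl; exact hbl (by simp)
    have step : compList (fun i => P0 (e i)) (c :: t) x
        = P0 (e c) (compList (fun i => P0 (e i)) t x) := rfl
    rw [step, K6 (keyZ r e htri horth a ha c hc hac).1
        (keyZ r e htri horth b hb c hc hbc).2]
    exact ih (fun i hi => hl i (by simp [hi])) a ha b hb
      (fun h => hal (by simp [h])) (fun h => hbl (by simp [h])) x

lemma M2' : ∀ (l : List ℕ), (∀ i ∈ l, i ∈ Finset.Icc 1 r) →
    ∀ k ∈ Finset.Icc 1 r, k ∉ l → ∀ x : A,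
    P2 (e k) (compList (fun i => P0 (e i)) l x) = P2 (e k) x := by
  intro l
  induction l with
  | nil => intro _ k _ _ x; rfl
  | cons c t ih =>
    intro hl k hk hkl x
    have hc : c ∈ Finset.Icc 1 r := hl c (by simp)
    have hkc : k ≠ c := by rintro rfl; exact hkl (by simp)
    have step : compList (fun i => P0 (e i)) (c :: t) x
        = P0 (e c) (compList (fun i => P0 (e i)) t x) := rfl
    rw [step, K8 (htri k hk) (htri c hc)
      (keyZ r e htri horth k hk c hc hkc).1 (keyZ r e htri horth k hk c hc hkc).2
      (keyZ r e htri horth c hc k hk hkc.symm).1 (keyZ r e htri horth c hc k hk hkc.symm).2]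
    exact ih (fun i hi => hl i (by simp [hi])) k hk (fun h => hkl (by simp [h])) x

lemma M1' : ∀ (l : List ℕ), l.Nodup → (∀ i ∈ l, i ∈ Finset.Icc 1 r) →
    ∀ k ∈ Finset.Icc 1 r, k ∉ l → ∀ x : A,
    P1 (e k) (compList (fun i => P0 (e i)) l x)
      = P1 (e k) x - ∑ i ∈ l.toFinset, (dd (e k) (e i) x + dd (e i) (e k) x) := by
  intro l
  induction l with
  | nil => intro _ _ k _ _ x; simp; rfl
  | cons c t ih =>
    intro hnd hl k hk hkl x
    obtain ⟨hct, hndt⟩ := List.nodup_cons.mp hnd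
    have hc : c ∈ Finset.Icc 1 r := hl c (by simp)
    have hkc : k ≠ c := by rintro rfl; exact hkl (by simp)
    have hlt : ∀ i ∈ t, i ∈ Finset.Icc 1 r := fun i hi => hl i (by simp [hi])
    have hkt : k ∉ t := fun h => hkl (by simp [h])
    have step : compList (fun i => P0 (e i)) (c :: t) x
        = P0 (e c) (compList (fun i => P0 (e i)) t x) := rfl
    rw [step, K7 (htri k hk) (htri c hc)
      (keyZ r e htri horth k hk c hc hkc).1 (keyZ r e htri horth k hk c hc hkc).2
      (keyZ r e htri horth c hc k hk hkc.symm).1 (keyZ r e htri horth c hc k hk hkc.symm).2,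
      M0 r e htri horth t hlt k hk c hc hkt hct,
      M0 r e htri horth t hlt c hc k hk hct hkt,
      ih hndt hlt k hk hkt]
    rw [List.toFinset_cons, Finset.sum_insert (by simpa using hct)]
    abel

lemma Mmain : ∀ (l : List ℕ), l.Nodup → (∀ i ∈ l, i ∈ Finset.Icc 1 r) → ∀ x : A,
    compList (fun i => P0 (e i)) l x
      = x - (∑ i ∈ l.toFinset, P1 (e i) x) - (∑ i ∈ l.toFinset, P2 (e i) x)
        + ∑ i ∈ l.toFinset, ∑ j ∈ l.toFinset.erase i, dd (e i) (e j) x := by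
  intro l
  induction l with
  | nil => intro _ _ x; simp; rfl
  | cons c t ih =>
    intro hnd hl x
    obtain ⟨hct, hndt⟩ := List.nodup_cons.mp hnd
    have hc : c ∈ Finset.Icc 1 r := hl c (by simp)
    have hlt : ∀ i ∈ t, i ∈ Finset.Icc 1 r := fun i hi => hl i (by simp [hi])
    have hctf : c ∉ t.toFinset := by simpa using hct
    have step : compList (fun i => P0 (e i)) (c :: t) x
        = P0 (e c) (compList (fun i => P0 (e i)) t x) := rfl
    rw [step, K1 (htri c hc),
      M1' r e htri horth t hndt hlt c hc hct,
      M2' r e htri horth t hlt c hc hct,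
      ih hndt hlt,
      List.toFinset_cons,
      Finset.sum_insert hctf, Finset.sum_insert hctf,
      DS t.toFinset c hctf, Finset.sum_add_distrib]
    abel

end Main

/-- A piece of Lemma 3.1 (iii) (for C*-algebras): for mutually orthogonal tripotents
`e₁, …, e_r` and `2 ≤ m ≤ r`,
`∏_{i=1}^{m−1} P₀(e_i) = ∏_{i=1}^{r} P₀(e_i)
  + Σ_{k=m}^{r} P₁(e_k) ∘ ∏_{i ≤ r, i ≠ k} P₀(e_i)
  + Σ_{m ≤ i < k ≤ r} P₁(e_i) ∘ P₁(e_k) + Σ_{i=m}^{r} P₂(e_i)`. -/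

lemma final_sums {B : Type*} [AddCommGroup B] (m r : ℕ) (hm2 : 2 ≤ m) (hmr : m ≤ r)
    (x : B) (p1 p2 : ℕ → B) (d : ℕ → ℕ → B) :
    x - (∑ i ∈ Finset.Icc 1 (m-1), p1 i) - (∑ i ∈ Finset.Icc 1 (m-1), p2 i)
      + ∑ i ∈ Finset.Icc 1 (m-1), ∑ j ∈ (Finset.Icc 1 (m-1)).erase i, d i j
    = (x - (∑ i ∈ Finset.Icc 1 r, p1 i) - (∑ i ∈ Finset.Icc 1 r, p2 i)
        + ∑ i ∈ Finset.Icc 1 r, ∑ j ∈ (Finset.Icc 1 r).erase i, d i j)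
      + (∑ k ∈ Finset.Icc m r, (p1 k - ∑ i ∈ (Finset.Icc 1 r).erase k, (d k i + d i k)))
      + (∑ i ∈ Finset.Icc m r, ∑ k ∈ Finset.Ioc i r, (d i k + d k i))
      + ∑ i ∈ Finset.Icc m r, p2 i := by
  have hsplit : Finset.Icc 1 r = Finset.Icc 1 (m-1) ∪ Finset.Icc m r := by
    ext a; simp only [Finset.mem_Icc, Finset.mem_union]; omega
  have hdisj : Disjoint (Finset.Icc 1 (m-1)) (Finset.Icc m r) := by
    rw [Finset.disjoint_left]; intro a ha hb
    simp only [Finset.mem_Icc] at ha hb; omega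
  -- split the single sums
  have hp1 : (∑ i ∈ Finset.Icc 1 r, p1 i)
      = (∑ i ∈ Finset.Icc 1 (m-1), p1 i) + ∑ i ∈ Finset.Icc m r, p1 i := by
    rw [hsplit, Finset.sum_union hdisj]
  have hp2 : (∑ i ∈ Finset.Icc 1 r, p2 i)
      = (∑ i ∈ Finset.Icc 1 (m-1), p2 i) + ∑ i ∈ Finset.Icc m r, p2 i := by
    rw [hsplit, Finset.sum_union hdisj]
  -- split the big double sum
  have T1 : (∑ i ∈ Finset.Icc 1 r, ∑ j ∈ (Finset.Icc 1 r).erase i, d i j)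
      = (∑ i ∈ Finset.Icc 1 (m-1), ∑ j ∈ (Finset.Icc 1 (m-1)).erase i, d i j)
        + (∑ i ∈ Finset.Icc 1 (m-1), ∑ j ∈ Finset.Icc m r, d i j)
        + ((∑ i ∈ Finset.Icc m r, ∑ j ∈ Finset.Icc 1 (m-1), d i j)
        + (∑ i ∈ Finset.Icc m r, ∑ j ∈ (Finset.Icc m r).erase i, d i j)) := by
    conv_lhs => rw [hsplit]
    rw [Finset.sum_union hdisj, ← hsplit]
    have c1 : ∀ i ∈ Finset.Icc 1 (m-1),
        (∑ j ∈ (Finset.Icc 1 r).erase i, d i j)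
          = (∑ j ∈ (Finset.Icc 1 (m-1)).erase i, d i j) + ∑ j ∈ Finset.Icc m r, d i j := by
      intro i hi
      simp only [Finset.mem_Icc] at hi
      have hU : (Finset.Icc 1 r).erase i
          = ((Finset.Icc 1 (m-1)).erase i) ∪ Finset.Icc m r := by
        ext a
        simp only [Finset.mem_erase, Finset.mem_Icc, Finset.mem_union]; omega
      rw [hU, Finset.sum_union (by
        rw [Finset.disjoint_left]; intro a ha hb
        simp only [Finset.mem_erase, Finset.mem_Icc] at ha hb; omega)]
    have c2 : ∀ i ∈ Finset.Icc m r,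
        (∑ j ∈ (Finset.Icc 1 r).erase i, d i j)
          = (∑ j ∈ Finset.Icc 1 (m-1), d i j) + ∑ j ∈ (Finset.Icc m r).erase i, d i j := by
      intro i hi
      simp only [Finset.mem_Icc] at hi
      have hU : (Finset.Icc 1 r).erase i
          = Finset.Icc 1 (m-1) ∪ ((Finset.Icc m r).erase i) := by
        ext a
        simp only [Finset.mem_erase, Finset.mem_Icc, Finset.mem_union]; omega
      rw [hU, Finset.sum_union (by
        rw [Finset.disjoint_left]; intro a ha hb
        simp only [Finset.mem_erase, Finset.mem_Icc] at ha hb; omega)]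
    rw [Finset.sum_congr rfl c1, Finset.sum_congr rfl c2,
      Finset.sum_add_distrib, Finset.sum_add_distrib]
  -- split the subtracted double sums in term 2
  have T2 : (∑ k ∈ Finset.Icc m r, ∑ i ∈ (Finset.Icc 1 r).erase k, (d k i + d i k))
      = (∑ k ∈ Finset.Icc m r, ∑ i ∈ Finset.Icc 1 (m-1), d k i)
        + (∑ k ∈ Finset.Icc m r, ∑ i ∈ Finset.Icc 1 (m-1), d i k)
        + ((∑ k ∈ Finset.Icc m r, ∑ i ∈ (Finset.Icc m r).erase k, d k i)
        + (∑ k ∈ Finset.Icc m r, ∑ i ∈ (Finset.Icc m r).erase k, d i k)) := by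
    have c2 : ∀ k ∈ Finset.Icc m r,
        (∑ i ∈ (Finset.Icc 1 r).erase k, (d k i + d i k))
          = ((∑ i ∈ Finset.Icc 1 (m-1), d k i) + ∑ i ∈ Finset.Icc 1 (m-1), d i k)
            + ((∑ i ∈ (Finset.Icc m r).erase k, d k i)
              + ∑ i ∈ (Finset.Icc m r).erase k, d i k) := by
      intro k hk
      simp only [Finset.mem_Icc] at hk
      have hU : (Finset.Icc 1 r).erase k
          = Finset.Icc 1 (m-1) ∪ ((Finset.Icc m r).erase k) := by
        ext a
        simp only [Finset.mem_erase, Finset.mem_Icc, Finset.mem_union]; omega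
      rw [hU, Finset.sum_union (by
        rw [Finset.disjoint_left]; intro a ha hb
        simp only [Finset.mem_erase, Finset.mem_Icc] at ha hb; omega),
        Finset.sum_add_distrib, Finset.sum_add_distrib]
    rw [Finset.sum_congr rfl c2, Finset.sum_add_distrib, Finset.sum_add_distrib,
      Finset.sum_add_distrib]
  -- symmetry identities
  have S1 : (∑ k ∈ Finset.Icc m r, ∑ i ∈ (Finset.Icc m r).erase k, d i k)
      = ∑ i ∈ Finset.Icc m r, ∑ j ∈ (Finset.Icc m r).erase i, d i j := by
    refine Finset.sum_comm' ?_
    intro a b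
    simp only [Finset.mem_erase, Finset.mem_Icc]
    omega
  have S2 : (∑ i ∈ Finset.Icc 1 (m-1), ∑ j ∈ Finset.Icc m r, d i j)
      = ∑ k ∈ Finset.Icc m r, ∑ i ∈ Finset.Icc 1 (m-1), d i k := Finset.sum_comm
  -- the Ioc double sum
  have T3 : (∑ i ∈ Finset.Icc m r, ∑ k ∈ Finset.Ioc i r, (d i k + d k i))
      = ∑ i ∈ Finset.Icc m r, ∑ j ∈ (Finset.Icc m r).erase i, d i j := by
    have c3 : ∀ i ∈ Finset.Icc m r,
        (∑ j ∈ (Finset.Icc m r).erase i, d i j)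
          = (∑ j ∈ (Finset.Icc m r).filter (· < i), d i j) + ∑ j ∈ Finset.Ioc i r, d i j := by
      intro i hi
      simp only [Finset.mem_Icc] at hi
      have hU : (Finset.Icc m r).erase i
          = ((Finset.Icc m r).filter (· < i)) ∪ Finset.Ioc i r := by
        ext a
        simp only [Finset.mem_erase, Finset.mem_Icc, Finset.mem_union, Finset.mem_filter,
          Finset.mem_Ioc]; omega
      rw [hU, Finset.sum_union (by
        rw [Finset.disjoint_left]; intro a ha hb
        simp only [Finset.mem_filter, Finset.mem_Icc, Finset.mem_Ioc] at ha hb; omega)]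
    have S3 : (∑ i ∈ Finset.Icc m r, ∑ j ∈ (Finset.Icc m r).filter (· < i), d i j)
        = ∑ j ∈ Finset.Icc m r, ∑ i ∈ Finset.Ioc j r, d i j := by
      refine Finset.sum_comm' ?_
      intro a b
      simp only [Finset.mem_filter, Finset.mem_Icc, Finset.mem_Ioc]
      omega
    rw [Finset.sum_congr rfl c3, Finset.sum_add_distrib, S3]
    rw [← Finset.sum_add_distrib]
    rw [Finset.sum_congr rfl (fun i _ => (Finset.sum_add_distrib).symm)]
    exact Finset.sum_congr rfl fun i _ => Finset.sum_congr rfl fun k _ => add_comm _ _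
  rw [hp1, hp2, T1, Finset.sum_sub_distrib, T2, S1, ← S2, T3]
  abel

theorem stmt9 {A : Type*} [NonUnitalCStarAlgebra A] (r : ℕ) (hr : 2 ≤ r) (e : ℕ → A)
    (htri : ∀ i ∈ Finset.Icc 1 r, e i * star (e i) * e i = e i)
    (horth : ∀ i ∈ Finset.Icc 1 r, ∀ j ∈ Finset.Icc 1 r, i ≠ j →
      ∀ x : A, e i * star (e j) * x + x * star (e j) * e i = 0)
    (m : ℕ) (hm2 : 2 ≤ m) (hmr : m ≤ r) :
    ∀ x : A,
      compList (fun i => P0 (e i)) (List.range' 1 (m - 1)) x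
        = compList (fun i => P0 (e i)) (List.range' 1 r) x
          + ∑ k ∈ Finset.Icc m r,
              P1 (e k) (compList (fun i => P0 (e i)) ((List.range' 1 r).filter (· ≠ k)) x)
          + ∑ i ∈ Finset.Icc m r, ∑ k ∈ Finset.Ioc i r, P1 (e i) (P1 (e k) x)
          + ∑ i ∈ Finset.Icc m r, P2 (e i) x := by
  intro x
  have hNd : ∀ n : ℕ, (List.range' 1 n).Nodup := fun n => List.nodup_range' (h := Nat.one_pos)
  have hmem : ∀ n, n ≤ r → ∀ i ∈ List.range' 1 n, i ∈ Finset.Icc 1 r := by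
    intro n hn i hi
    rw [List.mem_range'_1] at hi
    simp only [Finset.mem_Icc]
    omega
  have htof : ∀ n : ℕ, (List.range' 1 n).toFinset = Finset.Icc 1 n := by
    intro n
    ext a
    simp only [List.mem_toFinset, List.mem_range'_1, Finset.mem_Icc]
    omega
  rw [Mmain r e htri horth _ (hNd (m-1)) (hmem (m-1) (by omega)) x,
    Mmain r e htri horth _ (hNd r) (hmem r le_rfl) x]
  have hterm2 : ∀ k ∈ Finset.Icc m r,
      P1 (e k) (compList (fun i => P0 (e i)) ((List.range' 1 r).filter (· ≠ k)) x)
        = P1 (e k) x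
          - ∑ i ∈ (Finset.Icc 1 r).erase k, (dd (e k) (e i) x + dd (e i) (e k) x) := by
    intro k hk
    simp only [Finset.mem_Icc] at hk
    have hk' : k ∈ Finset.Icc 1 r := by simp only [Finset.mem_Icc]; omega
    have hnd : ((List.range' 1 r).filter (· ≠ k)).Nodup := (hNd r).filter _
    have hsub : ∀ i ∈ (List.range' 1 r).filter (· ≠ k), i ∈ Finset.Icc 1 r :=
      fun i hi => hmem r le_rfl i (List.mem_of_mem_filter hi)
    have hknot : k ∉ (List.range' 1 r).filter (· ≠ k) := by
      simp [List.mem_filter]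
    rw [M1' r e htri horth _ hnd hsub k hk' hknot x]
    have hfe : ((List.range' 1 r).filter (· ≠ k)).toFinset = (Finset.Icc 1 r).erase k := by
      ext a
      simp only [List.toFinset_filter, decide_not, Finset.mem_filter, List.mem_toFinset,
        List.mem_range'_1, Finset.mem_erase, Finset.mem_Icc, Bool.not_eq_true',
        decide_eq_false_iff_not]
      omega
    rw [hfe]
  rw [Finset.sum_congr rfl hterm2]
  have hterm3 : ∀ i ∈ Finset.Icc m r,
      (∑ k ∈ Finset.Ioc i r, P1 (e i) (P1 (e k) x))
        = ∑ k ∈ Finset.Ioc i r, (dd (e i) (e k) x + dd (e k) (e i) x) := by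
    intro i hi
    simp only [Finset.mem_Icc] at hi
    refine Finset.sum_congr rfl ?_
    intro k hk
    simp only [Finset.mem_Ioc] at hk
    have hi' : i ∈ Finset.Icc 1 r := by simp only [Finset.mem_Icc]; omega
    have hk' : k ∈ Finset.Icc 1 r := by simp only [Finset.mem_Icc]; omega
    have hik : i ≠ k := by omega
    exact K5 (htri i hi') (htri k hk')
      (keyZ r e htri horth i hi' k hk' hik).1 (keyZ r e htri horth i hi' k hk' hik).2
      (keyZ r e htri horth k hk' i hi' hik.symm).1 (keyZ r e htri horth k hk' i hi' hik.symm).2 x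
  rw [Finset.sum_congr rfl hterm3]
  simp only [htof]
  exact final_sums m r hm2 hmr x (fun i => P1 (e i) x) (fun i => P2 (e i) x)
    (fun i j => dd (e i) (e j) x)
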